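/- For every sequence of measure spaces $\{(\Omega_i,\Sigma_i,\mu_i)\}_{i\in\mathbb{N}}$ there exists a measure $\mu$ on the product $\sigma$-algebra $\bigotimes_{i\in\mathbb{N}}\Sigma_i$ on $\prod_{i\in\mathbb{N}}\Omega_i$ such that for every finite rectangle $\mathscr{C} = \prod_{i\in\mathbb{N}}\mathscr{C}_i$ ($\mathscr{C}_i\in\Sigma_i$, $\prod_i \mu_i(\mathscr{C}_i)$ convergent in $[0,\infty)$) one has $\mu(\mathscr{C}) = \prod_{i\in\mathbb{N}} \mu_i(\mathscr{C}_i)$. -/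

import Mathlib

open MeasureTheory Filter Set
open scoped ENNReal

/-- `HasVol μ C v` says that the rectangle `∏ᵢ Cᵢ` is a *finite rectangle*:
all sides are measurable with finite measure and the infinite product
`∏ᵢ μᵢ(Cᵢ)` converges to the finite value `v ∈ [0,∞)` (its volume). -/
def HasVol {Ω : ℕ → Type*} [∀ i, MeasurableSpace (Ω i)]
    (μ : ∀ i, Measure (Ω i)) (C : ∀ i, Set (Ω i)) (v : ℝ) : Prop :=
  (∀ i, MeasurableSet (C i)) ∧ (∀ i, μ i (C i) ≠ ∞) ∧
    Tendsto (fun m => ∏ i ∈ Finset.range m, (μ i (C i)).toReal) atTop (nhds v)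

namespace StmtAux

variable {Ω : ℕ → Type*} [∀ i, MeasurableSpace (Ω i)] {μ : ∀ i, Measure (Ω i)}

lemma hasVol_nonneg {C : ∀ i, Set (Ω i)} {v : ℝ} (h : HasVol μ C v) : 0 ≤ v :=
  ge_of_tendsto h.2.2 (Eventually.of_forall fun m =>
    Finset.prod_nonneg fun _ _ => ENNReal.toReal_nonneg)

lemma hasVol_zero {C : ∀ i, Set (Ω i)} {v : ℝ} (h : HasVol μ C v) (i : ℕ)
    (h0 : μ i (C i) = 0) : v = 0 := by
  have h2 : Tendsto (fun m => ∏ j ∈ Finset.range m, (μ j (C j)).toReal) atTop (nhds 0) := by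
    apply Tendsto.congr' _ tendsto_const_nhds
    filter_upwards [eventually_ge_atTop (i + 1)] with m hm
    symm
    exact Finset.prod_eq_zero (i := i) (Finset.mem_range.2 (by omega)) (by simp [h0])
  exact tendsto_nhds_unique h.2.2 h2

lemma hasVol_update {C : ∀ i, Set (Ω i)} {v : ℝ} (h : HasVol μ C v) (i : ℕ)
    {E : Set (Ω i)} (hE : MeasurableSet E) (hsub : E ⊆ C i) :
    HasVol μ (Function.update C i E)
      ((μ i E).toReal / (μ i (C i)).toReal * v) := by
  have hEle : μ i E ≤ μ i (C i) := measure_mono hsub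
  have hEfin : μ i E ≠ ∞ := fun hh => h.2.1 i (top_le_iff.1 (hh ▸ hEle))
  refine ⟨fun j => ?_, fun j => ?_, ?_⟩
  · rcases eq_or_ne j i with rfl | hj
    · simpa using hE
    · simpa [Function.update_apply, hj] using h.1 j
  · rcases eq_or_ne j i with rfl | hj
    · simpa using hEfin
    · simpa [Function.update_apply, hj] using h.2.1 j
  · by_cases h0 : μ i (C i) = 0
    · have hv0 : v = 0 := hasVol_zero h i h0
      have hE0 : μ i E = 0 := le_antisymm (h0 ▸ hEle) zero_le
      rw [hv0, mul_zero]
      apply Tendsto.congr' _ tendsto_const_nhds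
      filter_upwards [eventually_ge_atTop (i + 1)] with m hm
      symm
      refine Finset.prod_eq_zero (i := i) (Finset.mem_range.2 (by omega)) ?_
      simp [hE0]
    · have ha : (μ i (C i)).toReal ≠ 0 := by
        simp [ENNReal.toReal_eq_zero_iff, h0, h.2.1 i]
      have key : ∀ m, i < m →
          (∏ j ∈ Finset.range m, (μ j (Function.update C i E j)).toReal)
            = (μ i E).toReal / (μ i (C i)).toReal *
              ∏ j ∈ Finset.range m, (μ j (C j)).toReal := by
        intro m hm
        have him : i ∈ Finset.range m := Finset.mem_range.2 hm
        rw [← Finset.mul_prod_erase _ _ him, ← Finset.mul_prod_erase _ (fun j => (μ j (C j)).toReal) him]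
        have : ∀ j ∈ (Finset.range m).erase i,
            (μ j (Function.update C i E j)).toReal = (μ j (C j)).toReal := by
          intro j hj
          have hji : j ≠ i := Finset.ne_of_mem_erase hj
          simp [Function.update_apply, hji]
        rw [Finset.prod_congr rfl this]
        simp only [Function.update_self]
        field_simp
      apply Tendsto.congr' _ ((h.2.2).const_mul ((μ i E).toReal / (μ i (C i)).toReal))
      filter_upwards [eventually_ge_atTop (i + 1)] with m hm
      exact (key m (by omega)).symm

lemma hasVol_split {D : ∀ i, Set (Ω i)} {w : ℝ} (h : HasVol μ D w) (i : ℕ)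
    {S : Set (Ω i)} (hS : MeasurableSet S) :
    ∃ v₁ v₂ : ℝ, 0 ≤ v₁ ∧ 0 ≤ v₂ ∧ v₁ + v₂ = w ∧
      HasVol μ (Function.update D i (D i ∩ S)) v₁ ∧
      HasVol μ (Function.update D i (D i \ S)) v₂ := by
  have hw : 0 ≤ w := hasVol_nonneg h
  have h1 := hasVol_update h i ((h.1 i).inter hS) inter_subset_left
  have h2 := hasVol_update h i ((h.1 i).diff hS) diff_subset
  refine ⟨_, _, by positivity, by positivity, ?_, h1, h2⟩
  by_cases h0 : μ i (D i) = 0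
  · have := hasVol_zero h i h0
    simp [this]
  · have hfin := h.2.1 i
    have habc : μ i (D i ∩ S) + μ i (D i \ S) = μ i (D i) :=
      measure_inter_add_diff (D i) hS
    have hbfin : μ i (D i ∩ S) ≠ ∞ :=
      fun hh => hfin (top_le_iff.1 (hh ▸ measure_mono inter_subset_left))
    have hcfin : μ i (D i \ S) ≠ ∞ :=
      fun hh => hfin (top_le_iff.1 (hh ▸ measure_mono diff_subset))
    have ha : (μ i (D i)).toReal ≠ 0 := by
      simp [ENNReal.toReal_eq_zero_iff, h0, hfin]
    have : (μ i (D i ∩ S)).toReal + (μ i (D i \ S)).toReal = (μ i (D i)).toReal := by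
      rw [← ENNReal.toReal_add hbfin hcfin, habc]
    field_simp
    nlinarith [this]

lemma pi_update_inter (C : ∀ i, Set (Ω i)) (i : ℕ) (S : Set (Ω i)) :
    univ.pi (Function.update C i (C i ∩ S)) =
      univ.pi C ∩ Function.eval i ⁻¹' S := by
  ext f
  simp only [Set.mem_pi, Set.mem_univ, true_implies, Set.mem_inter_iff,
    Set.mem_preimage, Function.eval]
  constructor
  · intro hf
    have hi := hf i
    rw [Function.update_self] at hi
    refine ⟨fun j => ?_, hi.2⟩
    rcases eq_or_ne j i with rfl | hj
    · exact hi.1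
    · have := hf j
      rwa [Function.update_of_ne hj] at this
  · rintro ⟨hf, hfi⟩ j
    rcases eq_or_ne j i with rfl | hj
    · rw [Function.update_self]; exact ⟨hf j, hfi⟩
    · rw [Function.update_of_ne hj]; exact hf j

lemma pi_update_diff (C : ∀ i, Set (Ω i)) (i : ℕ) (S : Set (Ω i)) :
    univ.pi (Function.update C i (C i \ S)) =
      univ.pi C \ Function.eval i ⁻¹' S := by
  ext f
  simp only [Set.mem_pi, Set.mem_univ, true_implies, Set.mem_diff,
    Set.mem_preimage, Function.eval]
  constructor
  · intro hf
    have hi := hf i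
    rw [Function.update_self] at hi
    refine ⟨fun j => ?_, hi.2⟩
    rcases eq_or_ne j i with rfl | hj
    · exact hi.1
    · have := hf j
      rwa [Function.update_of_ne hj] at this
  · rintro ⟨hf, hfi⟩ j
    rcases eq_or_ne j i with rfl | hj
    · rw [Function.update_self]; exact ⟨hf j, hfi⟩
    · rw [Function.update_of_ne hj]; exact hf j

variable (μ) in
noncomputable def vol (A : Set (∀ i, Ω i)) : ℝ≥0∞ :=
  ⨅ (C : ∀ i, Set (Ω i)) (v : ℝ) (_ : HasVol μ C v ∧ univ.pi C = A),
    ENNReal.ofReal v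

lemma vol_le {A : Set (∀ i, Ω i)} {C : ∀ i, Set (Ω i)} {v : ℝ}
    (h : HasVol μ C v) (hA : univ.pi C = A) : vol μ A ≤ ENNReal.ofReal v := by
  refine iInf_le_of_le C (iInf_le_of_le v ?_)
  exact iInf_le_of_le ⟨h, hA⟩ le_rfl

lemma hasVol_empty : HasVol μ (fun i => (∅ : Set (Ω i))) 0 := by
  refine ⟨fun i => MeasurableSet.empty, fun i => by simp, ?_⟩
  apply Tendsto.congr' _ tendsto_const_nhds
  filter_upwards [eventually_ge_atTop 1] with m hm
  symm
  exact Finset.prod_eq_zero (i := 0) (Finset.mem_range.2 (by omega)) (by simp)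

lemma vol_empty : vol μ (∅ : Set (∀ i, Ω i)) = 0 := by
  refine le_antisymm ?_ zero_le
  have h : vol μ (∅ : Set (∀ i, Ω i)) ≤ ENNReal.ofReal 0 :=
    vol_le hasVol_empty (Set.univ_pi_eq_empty (i := 0) rfl)
  simpa using h

open Classical in
noncomputable def gfun {α : ℕ → Type*} [∀ i, MeasurableSpace (α i)]
    (P : ∀ i, Measure (α i)) (D : ℕ → ∀ i, Set (α i)) (M : ℕ → ℕ)
    (n k : ℕ) (f : ∀ i, α i) : ℝ≥0∞ :=
  ∏ i ∈ Finset.range (M n),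
    (if i < k then (if f i ∈ D n i then 1 else 0) else P i (D n i))

lemma exists_step {α : ℕ → Type*} [∀ i, MeasurableSpace (α i)]
    (P : ∀ i, Measure (α i)) [hP : ∀ i, IsProbabilityMeasure (P i)]
    (C : ∀ i, Set (α i)) (hC1 : ∀ i, P i (C i) = 1)
    (D : ℕ → ∀ i, Set (α i)) (hDm : ∀ n i, MeasurableSet (D n i)) (M : ℕ → ℕ)
    (k : ℕ) (f : ∀ i, α i) (hf : ∑' n, gfun P D M n k f < 1) :
    ∃ x, x ∈ C k ∧ ∑' n, gfun P D M n (k+1) (Function.update f k x) < 1 := by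
  classical
  set r : ℕ → ℝ≥0∞ := fun n => ∏ i ∈ (Finset.range (M n)).erase k,
      (if i < k then (if f i ∈ D n i then (1:ℝ≥0∞) else 0) else P i (D n i)) with hrdef
  have hg' : ∀ n x, gfun P D M n (k+1) (Function.update f k x)
      = (if k < M n then (if x ∈ D n k then 1 else 0) else 1) * r n := by
    intro n x
    by_cases hk : k < M n
    · rw [gfun, ← Finset.mul_prod_erase _ _ (Finset.mem_range.2 hk), if_pos hk]
      congr 1
      · rw [if_pos (Nat.lt_succ_self k), Function.update_self]
      · apply Finset.prod_congr rfl
        intro i hi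
        have hik : i ≠ k := Finset.ne_of_mem_erase hi
        rw [Function.update_of_ne hik]
        by_cases h2 : i < k
        · rw [if_pos h2, if_pos (by omega)]
        · rw [if_neg h2, if_neg (by omega)]
    · rw [if_neg hk, one_mul, gfun]
      simp only [hrdef]
      rw [Finset.erase_eq_of_notMem (by simp only [Finset.mem_range]; omega)]
      apply Finset.prod_congr rfl
      intro i hi
      have hik : i < k := by simp only [Finset.mem_range] at hi; omega
      rw [Function.update_of_ne (by omega), if_pos (by omega), if_pos hik]
  have hg2 : ∀ n, gfun P D M n k f
      = (if k < M n then P k (D n k) else 1) * r n := by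
    intro n
    by_cases hk : k < M n
    · rw [gfun, ← Finset.mul_prod_erase _ _ (Finset.mem_range.2 hk), if_pos hk,
        if_neg (lt_irrefl k)]
    · rw [if_neg hk, one_mul, gfun]
      simp only [hrdef]
      rw [Finset.erase_eq_of_notMem (by simp only [Finset.mem_range]; omega)]
  have hφmeas : ∀ n, Measurable fun x : α k =>
      (if k < M n then (if x ∈ D n k then (1:ℝ≥0∞) else 0) else 1) * r n := by
    intro n
    by_cases hk : k < M n
    · simp only [if_pos hk]
      exact ((measurable_const.ite (hDm n k) measurable_const)).mul_const _
    · simp only [if_neg hk]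
      exact measurable_const
  have hφint : ∀ n, ∫⁻ x, (if k < M n then (if x ∈ D n k then (1:ℝ≥0∞) else 0) else 1)
      * r n ∂(P k) = gfun P D M n k f := by
    intro n
    rw [hg2 n]
    by_cases hk : k < M n
    · simp only [if_pos hk]
      have heq : (fun x : α k => (if x ∈ D n k then (1:ℝ≥0∞) else 0) * r n)
          = (D n k).indicator (fun _ => r n) := by
        ext x
        by_cases hx : x ∈ D n k <;> simp [hx]
      rw [heq, lintegral_indicator (hDm n k), setLIntegral_const, mul_comm]
    · simp only [if_neg hk, one_mul, lintegral_const, measure_univ, mul_one]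
  have hmeas_tot : Measurable fun x : α k =>
      ∑' n, (if k < M n then (if x ∈ D n k then (1:ℝ≥0∞) else 0) else 1) * r n :=
    Measurable.ennreal_tsum hφmeas
  have hint : ∫⁻ x, (∑' n,
      (if k < M n then (if x ∈ D n k then (1:ℝ≥0∞) else 0) else 1) * r n) ∂(P k) < 1 := by
    rw [lintegral_tsum fun n => (hφmeas n).aemeasurable]
    calc ∑' n, ∫⁻ x, (if k < M n then (if x ∈ D n k then (1:ℝ≥0∞) else 0) else 1)
          * r n ∂(P k) = ∑' n, gfun P D M n k f := by
            exact tsum_congr fun n => hφint n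
      _ < 1 := hf
  by_contra hno
  push_neg at hno
  have hno' : ∀ x ∈ C k, (1:ℝ≥0∞) ≤ ∑' n,
      (if k < M n then (if x ∈ D n k then (1:ℝ≥0∞) else 0) else 1) * r n := by
    intro x hx
    have := hno x hx
    rw [← tsum_congr fun n => hg' n x]
    exact this
  have h1 : (1:ℝ≥0∞) ≤ ∫⁻ x, (∑' n,
      (if k < M n then (if x ∈ D n k then (1:ℝ≥0∞) else 0) else 1) * r n) ∂(P k) := by
    calc (1:ℝ≥0∞) = P k (C k) := (hC1 k).symm
      _ = ∫⁻ _ in C k, 1 ∂(P k) := by rw [setLIntegral_one]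
      _ ≤ ∫⁻ x in C k, (∑' n,
          (if k < M n then (if x ∈ D n k then (1:ℝ≥0∞) else 0) else 1) * r n) ∂(P k) :=
        setLIntegral_mono hmeas_tot hno'
      _ ≤ _ := setLIntegral_le_lintegral _ _
  exact absurd (h1.trans_lt hint) (lt_irrefl _)

lemma exists_point {α : ℕ → Type*} [∀ i, MeasurableSpace (α i)]
    (P : ∀ i, Measure (α i)) [hP : ∀ i, IsProbabilityMeasure (P i)]
    (C : ∀ i, Set (α i)) (hC1 : ∀ i, P i (C i) = 1)
    (D : ℕ → ∀ i, Set (α i)) (hDm : ∀ n i, MeasurableSet (D n i)) (M : ℕ → ℕ)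
    (hsum : ∑' n, ∏ i ∈ Finset.range (M n), P i (D n i) < 1) :
    ∃ ω : ∀ i, α i, (∀ i, ω i ∈ C i) ∧ ∀ n, ∃ i, i < M n ∧ ω i ∉ D n i := by
  classical
  have hCne : ∀ i, (C i).Nonempty :=
    fun i => nonempty_of_measure_ne_zero (by rw [hC1 i]; exact one_ne_zero)
  set Inv : ℕ → (∀ i, α i) → Prop := fun k f =>
    (∀ i, i < k → f i ∈ C i) ∧ ∑' n, gfun P D M n k f < 1 with hInvdef
  have hstep' : ∀ k f, Inv k f → ∃ f', Inv (k+1) f' ∧ ∀ i, i ≠ k → f' i = f i := by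
    intro k f hf
    obtain ⟨x, hxC, hx⟩ := exists_step P C hC1 D hDm M k f hf.2
    refine ⟨Function.update f k x, ⟨?_, hx⟩, ?_⟩
    · intro i hi
      rcases eq_or_ne i k with rfl | hik
      · rw [Function.update_self]; exact hxC
      · rw [Function.update_of_ne hik]; exact hf.1 i (by omega)
    · intro i hik
      rw [Function.update_of_ne hik]
  set f0 : ∀ i, α i := fun i => (hCne i).choose with hf0def
  have hInv0 : Inv 0 f0 := by
    constructor
    · intro i hi; omega
    · have : ∀ n, gfun P D M n 0 f0 = ∏ i ∈ Finset.range (M n), P i (D n i) := by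
        intro n
        rw [gfun]
        exact Finset.prod_congr rfl fun i _ => by rw [if_neg (by omega)]
      rw [tsum_congr this]
      exact hsum
  let F : ℕ → ∀ i, α i := fun k => Nat.rec f0
    (fun k fk => if h : Inv k fk then (hstep' k fk h).choose else fk) k
  have hFs : ∀ k, F (k+1) = if h : Inv k (F k) then (hstep' k (F k) h).choose else F k :=
    fun k => rfl
  have hFInv : ∀ k, Inv k (F k) := by
    intro k
    induction k with
    | zero => exact hInv0
    | succ k ih =>
      rw [hFs k, dif_pos ih]
      exact (hstep' k (F k) ih).choose_spec.1
  have hagree : ∀ k i, i < k → F k i = F (i+1) i := by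
    intro k
    induction k with
    | zero => intro i hi; omega
    | succ k ih =>
      intro i hi
      rcases eq_or_ne i k with rfl | hik
      · rfl
      · have h1 : F (k+1) i = F k i := by
          rw [hFs k, dif_pos (hFInv k)]
          exact (hstep' k (F k) (hFInv k)).choose_spec.2 i hik
        rw [h1]
        exact ih i (by omega)
  refine ⟨fun i => F (i+1) i, fun i => (hFInv (i+1)).1 i (Nat.lt_succ_self i), ?_⟩
  intro n
  by_contra hcon
  push_neg at hcon
  have h1 : gfun P D M n (M n) (F (M n)) = 1 := by
    rw [gfun]
    apply Finset.prod_eq_one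
    intro i hi
    have hiM : i < M n := Finset.mem_range.1 hi
    rw [if_pos hiM, if_pos]
    rw [hagree (M n) i hiM]
    exact hcon i hiM
  have h2 := (hFInv (M n)).2
  have h3 : (1:ℝ≥0∞) ≤ ∑' n', gfun P D M n' (M n) (F (M n)) :=
    h1 ▸ ENNReal.le_tsum n
  exact absurd (h3.trans_lt h2) (lt_irrefl _)

lemma key {C : ∀ i, Set (Ω i)} {v : ℝ} (hC : HasVol μ C v)
    (D : ℕ → ∀ i, Set (Ω i)) (w : ℕ → ℝ) (hD : ∀ n, HasVol μ (D n) (w n))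
    (hcov : univ.pi C ⊆ ⋃ n, univ.pi (D n)) :
    ENNReal.ofReal v ≤ ∑' n, ENNReal.ofReal (w n) := by
  classical
  by_contra hlt
  push_neg at hlt
  have hSfin : ∑' n, ENNReal.ofReal (w n) ≠ ∞ := (hlt.trans ENNReal.ofReal_lt_top).ne
  have hvpos : 0 < v := by
    by_contra hv
    push_neg at hv
    rw [ENNReal.ofReal_eq_zero.2 hv] at hlt
    exact absurd hlt (not_lt_of_ge zero_le)
  have ha0 : ∀ i, μ i (C i) ≠ 0 := fun i h0 => hvpos.ne' (hasVol_zero hC i h0)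
  have hafin : ∀ i, μ i (C i) ≠ ∞ := hC.2.1
  set P : ∀ i, Measure (Ω i) := fun i => (μ i (C i))⁻¹ • (μ i).restrict (C i) with hPdef
  have hPapp : ∀ i (S : Set (Ω i)), P i S = (μ i (C i))⁻¹ * μ i (S ∩ C i) := by
    intro i S
    rw [hPdef]
    simp [Measure.restrict_apply' (hC.1 i)]
  have hPone : ∀ i, P i (C i) = 1 := by
    intro i
    rw [hPapp, inter_self]
    exact ENNReal.inv_mul_cancel (ha0 i) (hafin i)
  haveI hPprob : ∀ i, IsProbabilityMeasure (P i) := by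
    intro i
    constructor
    rw [hPapp i univ, univ_inter]
    exact ENNReal.inv_mul_cancel (ha0 i) (hafin i)
  have hPle : ∀ i (S : Set (Ω i)), P i S ≤ 1 := fun i S => prob_le_one
  have hPfin : ∀ i (S : Set (Ω i)), P i S ≠ ∞ :=
    fun i S => ((hPle i S).trans_lt ENNReal.one_lt_top).ne
  set A : ℕ → ℝ := fun m => ∏ i ∈ Finset.range m, (μ i (C i)).toReal with hA
  have hApos : ∀ m, 0 < A m :=
    fun m => Finset.prod_pos fun i _ => ENNReal.toReal_pos (ha0 i) (hafin i)
  have hAtend : Tendsto A atTop (nhds v) := hC.2.2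
  have hPtoReal : ∀ i (S : Set (Ω i)),
      (P i S).toReal = (μ i (S ∩ C i)).toReal / (μ i (C i)).toReal := by
    intro i S
    rw [hPapp, ENNReal.toReal_mul, ENNReal.toReal_inv]
    ring
  set Q : ℕ → ℕ → ℝ := fun n m => ∏ i ∈ Finset.range m, (P i (D n i)).toReal with hQ
  have hQbound : ∀ n m, v * Q n m
      ≤ v / A m * ∏ i ∈ Finset.range m, (μ i (D n i)).toReal := by
    intro n m
    have h1 : Q n m = (∏ i ∈ Finset.range m, (μ i (D n i ∩ C i)).toReal) / A m := by
      rw [hQ]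
      simp only
      rw [hA]
      simp only
      rw [← Finset.prod_div_distrib]
      exact Finset.prod_congr rfl fun i _ => hPtoReal i (D n i)
    have h2 : ∏ i ∈ Finset.range m, (μ i (D n i ∩ C i)).toReal
        ≤ ∏ i ∈ Finset.range m, (μ i (D n i)).toReal :=
      Finset.prod_le_prod (fun i _ => ENNReal.toReal_nonneg)
        (fun i _ => ENNReal.toReal_mono ((hD n).2.1 i) (measure_mono inter_subset_left))
    calc v * Q n m
        = v / A m * ∏ i ∈ Finset.range m, (μ i (D n i ∩ C i)).toReal := by
          rw [h1]; field_simp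
      _ ≤ _ := mul_le_mul_of_nonneg_left h2 (div_nonneg hvpos.le (hApos m).le)
  have hQtend : ∀ n, Tendsto
      (fun m => v / A m * ∏ i ∈ Finset.range m, (μ i (D n i)).toReal)
      atTop (nhds (w n)) := by
    intro n
    have h1 : Tendsto (fun m => v / A m) atTop (nhds (v / v)) :=
      tendsto_const_nhds.div hAtend hvpos.ne'
    have h2 := h1.mul (hD n).2.2
    rw [div_self hvpos.ne', one_mul] at h2
    exact h2
  obtain ⟨δ, hδpos, hδsum⟩ := ENNReal.exists_pos_sum_of_countable
    (tsub_pos_of_lt hlt).ne' ℕ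
  have hMex : ∀ n, ∃ m, v * Q n m < w n + δ n := by
    intro n
    have hδn : (0:ℝ) < δ n := hδpos n
    obtain ⟨m, hm⟩ := ((hQtend n).eventually
      (gt_mem_nhds (lt_add_of_pos_right (w n) hδn))).exists
    exact ⟨m, (hQbound n m).trans_lt hm⟩
  choose M hM using hMex
  have hQnonneg : ∀ n, 0 ≤ Q n (M n) :=
    fun n => Finset.prod_nonneg fun i _ => ENNReal.toReal_nonneg
  have hT : ∀ n, ∏ i ∈ Finset.range (M n), P i (D n i) = ENNReal.ofReal (Q n (M n)) := by
    intro n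
    have hfin : (∏ i ∈ Finset.range (M n), P i (D n i)) ≠ ∞ :=
      (ENNReal.prod_lt_top fun i _ => (hPle i (D n i)).trans_lt ENNReal.one_lt_top).ne
    rw [← ENNReal.ofReal_toReal hfin, ENNReal.toReal_prod]
  have hsum1 : ∑' n, ∏ i ∈ Finset.range (M n), P i (D n i) < 1 := by
    have h1 : ∀ n, ENNReal.ofReal v * ENNReal.ofReal (Q n (M n))
        ≤ ENNReal.ofReal (w n) + (δ n : ℝ≥0∞) := by
      intro n
      rw [← ENNReal.ofReal_mul hvpos.le]
      calc ENNReal.ofReal (v * Q n (M n))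
          ≤ ENNReal.ofReal (w n + δ n) := ENNReal.ofReal_le_ofReal (hM n).le
        _ ≤ ENNReal.ofReal (w n) + ENNReal.ofReal (δ n) := ENNReal.ofReal_add_le
        _ = ENNReal.ofReal (w n) + (δ n : ℝ≥0∞) := by
            rw [ENNReal.ofReal_coe_nnreal]
    have h2 : ENNReal.ofReal v * ∑' n, ENNReal.ofReal (Q n (M n))
        ≤ ∑' n, ENNReal.ofReal (w n) + ∑' n, (δ n : ℝ≥0∞) := by
      rw [← ENNReal.tsum_mul_left, ← ENNReal.tsum_add]
      exact ENNReal.tsum_le_tsum h1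
    have h3 : ∑' n, ENNReal.ofReal (w n) + ∑' n, (δ n : ℝ≥0∞) < ENNReal.ofReal v := by
      calc ∑' n, ENNReal.ofReal (w n) + ∑' n, (δ n : ℝ≥0∞)
          < ∑' n, ENNReal.ofReal (w n) + (ENNReal.ofReal v - ∑' n, ENNReal.ofReal (w n)) :=
            ENNReal.add_lt_add_left hSfin hδsum
        _ = ENNReal.ofReal v := add_tsub_cancel_of_le hlt.le
    have h4 : ENNReal.ofReal v * ∑' n, ENNReal.ofReal (Q n (M n))
        < ENNReal.ofReal v * 1 := by
      rw [mul_one]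
      exact h2.trans_lt h3
    have h5 := (ENNReal.mul_lt_mul_iff_right (ENNReal.ofReal_pos.2 hvpos).ne'
      ENNReal.ofReal_ne_top).1 h4
    calc ∑' n, ∏ i ∈ Finset.range (M n), P i (D n i)
        = ∑' n, ENNReal.ofReal (Q n (M n)) := tsum_congr hT
      _ < 1 := h5
  obtain ⟨ω, hωC, hωD⟩ := exists_point P C hPone D (fun n i => (hD n).1 i) M hsum1
  have hωpi : ω ∈ univ.pi C := fun i _ => hωC i
  obtain ⟨s, ⟨n, rfl⟩, hωs⟩ := hcov hωpi
  obtain ⟨i, hiM, hiD⟩ := hωD n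
  exact hiD (hωs i (mem_univ i))

end StmtAux

theorem stmt_11 {Ω : ℕ → Type*} [∀ i, MeasurableSpace (Ω i)] (μ : ∀ i, Measure (Ω i)) :
    ∃ ν : Measure (∀ i, Ω i),
      ∀ (C : ∀ i, Set (Ω i)) (v : ℝ), HasVol μ C v →
        ν (Set.univ.pi C) = ENNReal.ofReal v := by
  classical
  have h0 : StmtAux.vol μ ∅ = 0 := StmtAux.vol_empty
  set outer := OuterMeasure.ofFunction (StmtAux.vol μ) h0 with houter
  have hcar : (MeasurableSpace.pi : MeasurableSpace (∀ i, Ω i)) ≤ outer.caratheodory := by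
    refine iSup_le fun i => ?_
    rw [MeasurableSpace.le_def]
    rintro s ⟨S, hS, rfl⟩
    refine OuterMeasure.ofFunction_caratheodory fun t => ?_
    refine le_iInf fun C => le_iInf fun v => le_iInf fun hCv => ?_
    obtain ⟨hC, rfl⟩ := hCv
    obtain ⟨v₁, v₂, h1, h2, h12, hV1, hV2⟩ := StmtAux.hasVol_split hC i hS
    calc StmtAux.vol μ (univ.pi C ∩ (fun f => f i) ⁻¹' S)
          + StmtAux.vol μ (univ.pi C \ (fun f => f i) ⁻¹' S)
        ≤ ENNReal.ofReal v₁ + ENNReal.ofReal v₂ :=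
          add_le_add (StmtAux.vol_le hV1 (StmtAux.pi_update_inter C i S))
            (StmtAux.vol_le hV2 (StmtAux.pi_update_diff C i S))
      _ = ENNReal.ofReal v := by rw [← ENNReal.ofReal_add h1 h2, h12]
  refine ⟨outer.toMeasure hcar, fun C v hCv => ?_⟩
  have hmeas : MeasurableSet (univ.pi C) := MeasurableSet.univ_pi fun i => hCv.1 i
  rw [MeasureTheory.toMeasure_apply outer hcar hmeas]
  refine le_antisymm ((OuterMeasure.ofFunction_le _).trans
    (StmtAux.vol_le hCv rfl)) ?_
  rw [houter, OuterMeasure.ofFunction_apply]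
  refine le_iInf fun t => le_iInf fun hcov => ?_
  refine ENNReal.le_of_forall_pos_le_add fun ε hε hfin => ?_
  have htn : ∀ n, StmtAux.vol μ (t n) ≠ ∞ :=
    fun n => ((ENNReal.le_tsum n).trans_lt hfin).ne
  obtain ⟨δ, hδpos, hδsum⟩ := ENNReal.exists_pos_sum_of_countable
    (by exact_mod_cast hε.ne' : (ε : ℝ≥0∞) ≠ 0) ℕ
  have hrep : ∀ n, ∃ (Dn : ∀ i, Set (Ω i)) (wn : ℝ), HasVol μ Dn wn ∧
      univ.pi Dn = t n ∧ ENNReal.ofReal wn ≤ StmtAux.vol μ (t n) + δ n := by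
    intro n
    have hlt : StmtAux.vol μ (t n) < StmtAux.vol μ (t n) + δ n :=
      ENNReal.lt_add_right (htn n) (by exact_mod_cast (hδpos n).ne')
    rw [StmtAux.vol] at hlt
    rw [iInf_lt_iff] at hlt
    obtain ⟨Dn, hlt⟩ := hlt
    rw [iInf_lt_iff] at hlt
    obtain ⟨wn, hlt⟩ := hlt
    rw [iInf_lt_iff] at hlt
    obtain ⟨⟨hDn, hpin⟩, hlt⟩ := hlt
    exact ⟨Dn, wn, hDn, hpin, hlt.le⟩
  choose Dn wn hDn hpin hwle using hrep
  have hcov' : univ.pi C ⊆ ⋃ n, univ.pi (Dn n) := by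
    refine hcov.trans ?_
    refine iUnion_mono fun n => ?_
    rw [hpin n]
  calc ENNReal.ofReal v ≤ ∑' n, ENNReal.ofReal (wn n) :=
        StmtAux.key hCv Dn wn hDn hcov'
    _ ≤ ∑' n, (StmtAux.vol μ (t n) + δ n) := ENNReal.tsum_le_tsum hwle
    _ = ∑' n, StmtAux.vol μ (t n) + ∑' n, (δ n : ℝ≥0∞) := ENNReal.tsum_add
    _ ≤ ∑' n, StmtAux.vol μ (t n) + ε := add_le_add_right hδsum.le _
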